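/- Assume |f(t,u,v)| ≤ M on D_M, the Lipschitz conditions |f(t,u2,v2) − f(t,u1,v1)| ≤ L1|u2 − u1| + L2|v2 − v1| on D_M, and q := (L1 + L2) M0 < 1. Then the operator equation Aψ = ψ has exactly one solution ψ in the closed ball B[0,M] = {ψ ∈ C[0,a] : ‖ψ‖ ≤ M}, and for the iterates ψ_0(t) = f(t,0,0), ψ_{k+1} = Aψ_k, one has ‖ψ_k − ψ‖ ≤ (q^k/(1 − q)) ‖ψ_1 − ψ_0‖ for every k ≥ 0. -/
import Mathlib


open Set MeasureTheory

/-- `u_ψ(t) = g(t) + ∫₀ᵃ G(t,s) ψ(s) ds`. -/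
noncomputable def uOf (a : ℝ) (G : ℝ → ℝ → ℝ) (g : ℝ → ℝ) (ψ : ℝ → ℝ) (t : ℝ) : ℝ :=
  g t + ∫ s in (0:ℝ)..a, G t s * ψ s

/-- The iteration `ψ₀(t) = f(t,0,0)`, `ψ_{k+1} = Aψ_k`, where
`(Aψ)(t) = f(t, u_ψ(t), u_ψ(φ(t)))`. -/
noncomputable def psiIter (a : ℝ) (G : ℝ → ℝ → ℝ) (g : ℝ → ℝ) (f : ℝ → ℝ → ℝ → ℝ)
    (φ : ℝ → ℝ) : ℕ → ℝ → ℝ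
  | 0 => fun t => f t 0 0
  | k + 1 => fun t =>
      f t (uOf a G g (psiIter a G g f φ k) t) (uOf a G g (psiIter a G g f φ k) (φ t))

/-- Under the boundedness, Lipschitz and contraction assumptions, the operator equation
`Aψ = ψ` has exactly one solution `ψ` in the ball `B[0,M]`, and the iterates
`ψ₀(t) = f(t,0,0)`, `ψ_{k+1} = Aψ_k` satisfy `‖ψ_k − ψ‖ ≤ (q^k/(1−q)) ‖ψ₁ − ψ₀‖`. -/
theorem fixed_point_existence_and_geometric_convergence
    (a : ℝ) (ha : 0 < a)
    (φ : ℝ → ℝ) (hφc : ContinuousOn φ (Icc 0 a)) (hφm : MapsTo φ (Icc 0 a) (Icc 0 a))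
    (G : ℝ → ℝ → ℝ)
    (hG : ContinuousOn (fun p : ℝ × ℝ => G p.1 p.2) (Icc 0 a ×ˢ Icc 0 a))
    (g : ℝ → ℝ) (hg : ContinuousOn g (Icc 0 a))
    (M0 : ℝ) (hM0 : IsGreatest ((fun t => ∫ s in (0:ℝ)..a, |G t s|) '' Icc 0 a) M0)
    (ng : ℝ) (hng : IsGreatest ((fun t => |g t|) '' Icc 0 a) ng)
    (f : ℝ → ℝ → ℝ → ℝ)
    (hfc : ContinuousOn (fun p : ℝ × ℝ × ℝ => f p.1 p.2.1 p.2.2)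
      (Icc 0 a ×ˢ (univ : Set ℝ) ×ˢ (univ : Set ℝ)))
    (M : ℝ) (hM : 0 < M)
    (hbound : ∀ t ∈ Icc (0:ℝ) a, ∀ u v : ℝ,
      |u| ≤ ng + M0 * M → |v| ≤ ng + M0 * M → |f t u v| ≤ M)
    (L1 L2 : ℝ) (hL1 : 0 ≤ L1) (hL2 : 0 ≤ L2)
    (hLip : ∀ t ∈ Icc (0:ℝ) a, ∀ u1 u2 v1 v2 : ℝ,
      |u1| ≤ ng + M0 * M → |u2| ≤ ng + M0 * M →
      |v1| ≤ ng + M0 * M → |v2| ≤ ng + M0 * M →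
      |f t u2 v2 - f t u1 v1| ≤ L1 * |u2 - u1| + L2 * |v2 - v1|)
    (hq : (L1 + L2) * M0 < 1) :
    ∃ ψ : ℝ → ℝ,
      (ContinuousOn ψ (Icc 0 a) ∧
        (∀ t ∈ Icc (0:ℝ) a, |ψ t| ≤ M) ∧
        (∀ t ∈ Icc (0:ℝ) a, ψ t = f t (uOf a G g ψ t) (uOf a G g ψ (φ t)))) ∧
      (∀ ψ2 : ℝ → ℝ,
        (ContinuousOn ψ2 (Icc 0 a) ∧
          (∀ t ∈ Icc (0:ℝ) a, |ψ2 t| ≤ M) ∧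
          (∀ t ∈ Icc (0:ℝ) a, ψ2 t = f t (uOf a G g ψ2 t) (uOf a G g ψ2 (φ t)))) →
        EqOn ψ2 ψ (Icc 0 a)) ∧
      (∀ d : ℝ,
        IsGreatest
          ((fun t => |psiIter a G g f φ 1 t - psiIter a G g f φ 0 t|) '' Icc 0 a) d →
        ∀ k : ℕ, ∀ t ∈ Icc (0:ℝ) a,
          |psiIter a G g f φ k t - ψ t|
            ≤ ((L1 + L2) * M0) ^ k / (1 - (L1 + L2) * M0) * d) := by
  have ha' : (0:ℝ) ≤ a := ha.le
  set q : ℝ := (L1 + L2) * M0 with hq_def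
  -- nonnegativity of the constants
  have hM0nn : 0 ≤ M0 := by
    obtain ⟨t0, _, hM0eq⟩ := hM0.1
    rw [← hM0eq]
    exact intervalIntegral.integral_nonneg ha' (fun s _ => abs_nonneg _)
  have hngnn : 0 ≤ ng := by
    obtain ⟨t1, _, hngeq⟩ := hng.1
    rw [← hngeq]; exact abs_nonneg _
  have hqnn : 0 ≤ q := mul_nonneg (add_nonneg hL1 hL2) hM0nn
  have hRnn : 0 ≤ ng + M0 * M := add_nonneg hngnn (mul_nonneg hM0nn hM.le)
  -- the projection onto [0, a]
  set P : ℝ → ↥(Icc (0:ℝ) a) := fun t => projIcc 0 a ha' t with hP_def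
  have hPc : Continuous fun t => (P t : ℝ) := continuous_subtype_val.comp continuous_projIcc
  have hPmem : ∀ t : ℝ, (P t : ℝ) ∈ Icc (0:ℝ) a := fun t => (P t).2
  have hPid : ∀ t ∈ Icc (0:ℝ) a, (P t : ℝ) = t := by
    intro t ht
    simp only [hP_def, projIcc_of_mem ha' ht]
  -- extension of G to the whole plane
  set Ge : ℝ → ℝ → ℝ := fun t s => G (P t : ℝ) (P s : ℝ) with hGe_def
  have hGec : Continuous fun p : ℝ × ℝ => Ge p.1 p.2 := by
    apply hG.comp_continuous ((hPc.comp continuous_fst).prodMk (hPc.comp continuous_snd))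
    intro p
    exact Set.mk_mem_prod (hPmem p.1) (hPmem p.2)
  have hGect : ∀ t, Continuous (Ge t) :=
    fun t => hGec.comp (continuous_const.prodMk continuous_id)
  -- integrability helpers
  have hint : ∀ (t : ℝ) (ψ : ℝ → ℝ), Continuous ψ →
      IntervalIntegrable (fun s => Ge t s * ψ s) volume 0 a :=
    fun t ψ hψ => ((hGect t).mul hψ).intervalIntegrable 0 a
  have habsint : ∀ (t : ℝ) (C : ℝ),
      IntervalIntegrable (fun s => |Ge t s| * C) volume 0 a :=
    fun t C => ((hGect t).abs.mul continuous_const).intervalIntegrable 0 a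
  -- the integral of |Ge t ·| is at most M0
  have hGeI : ∀ t : ℝ, (∫ s in (0:ℝ)..a, |Ge t s|) ≤ M0 := by
    intro t
    have hcongr : EqOn (fun s => |Ge t s|) (fun s => |G (P t : ℝ) s|) (uIcc 0 a) := by
      intro s hs
      rw [uIcc_of_le ha'] at hs
      simp only [hGe_def, hPid s hs]
    rw [intervalIntegral.integral_congr hcongr]
    exact hM0.2 ⟨(P t : ℝ), hPmem t, rfl⟩
  -- central estimate for the integral operator
  have hIb : ∀ (ψ : ℝ → ℝ), Continuous ψ → ∀ C : ℝ, (∀ s, |ψ s| ≤ C) →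
      ∀ t : ℝ, |∫ s in (0:ℝ)..a, Ge t s * ψ s| ≤ M0 * C := by
    intro ψ hψ C hC t
    have hC0 : 0 ≤ C := le_trans (abs_nonneg _) (hC 0)
    calc |∫ s in (0:ℝ)..a, Ge t s * ψ s|
        ≤ ∫ s in (0:ℝ)..a, |Ge t s * ψ s| :=
          intervalIntegral.abs_integral_le_integral_abs ha'
      _ ≤ ∫ s in (0:ℝ)..a, |Ge t s| * C := by
          apply intervalIntegral.integral_mono_on ha'
            ((hint t ψ hψ).abs) (habsint t C)
          intro s _
          rw [abs_mul]
          exact mul_le_mul_of_nonneg_left (hC s) (abs_nonneg _)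
      _ = (∫ s in (0:ℝ)..a, |Ge t s|) * C := by
          rw [intervalIntegral.integral_mul_const]
      _ ≤ M0 * C := mul_le_mul_of_nonneg_right (hGeI t) hC0
  -- the extended `u` operator
  set uE : (ℝ → ℝ) → ℝ → ℝ :=
    fun ψ t => g (P t : ℝ) + ∫ s in (0:ℝ)..a, Ge t s * ψ s with huE_def
  have huEc : ∀ ψ : ℝ → ℝ, Continuous ψ → Continuous (uE ψ) := by
    intro ψ hψ
    apply Continuous.add
    · exact hg.comp_continuous hPc hPmem
    · apply intervalIntegral.continuous_parametric_intervalIntegral_of_continuous'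
      exact hGec.mul (hψ.comp continuous_snd)
  have huEb : ∀ ψ : ℝ → ℝ, Continuous ψ → (∀ s, |ψ s| ≤ M) →
      ∀ t : ℝ, |uE ψ t| ≤ ng + M0 * M := by
    intro ψ hψ hb t
    calc |uE ψ t| ≤ |g (P t : ℝ)| + |∫ s in (0:ℝ)..a, Ge t s * ψ s| := abs_add_le _ _
      _ ≤ ng + M0 * M :=
          add_le_add (hng.2 ⟨(P t : ℝ), hPmem t, rfl⟩) (hIb ψ hψ M hb t)
  have huEdiff : ∀ ψ ζ : ℝ → ℝ, Continuous ψ → Continuous ζ → ∀ D : ℝ,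
      (∀ s, |ψ s - ζ s| ≤ D) → ∀ t : ℝ, |uE ψ t - uE ζ t| ≤ M0 * D := by
    intro ψ ζ hψ hζ D hD t
    have h1 : uE ψ t - uE ζ t = ∫ s in (0:ℝ)..a, Ge t s * (ψ s - ζ s) := by
      simp only [huE_def, add_sub_add_left_eq_sub]
      rw [← intervalIntegral.integral_sub (hint t ψ hψ) (hint t ζ hζ)]
      congr 1
      ext s
      ring
    rw [h1]
    exact hIb (fun s => ψ s - ζ s) (hψ.sub hζ) D hD t
  -- relating `uOf` and `uE`
  have huE_eq : ∀ ψ ζ : ℝ → ℝ, EqOn ψ ζ (Icc 0 a) →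
      ∀ t ∈ Icc (0:ℝ) a, uOf a G g ψ t = uE ζ t := by
    intro ψ ζ hEq t ht
    have hcongr : EqOn (fun s => G t s * ψ s) (fun s => Ge t s * ζ s) (uIcc 0 a) := by
      intro s hs
      rw [uIcc_of_le ha'] at hs
      simp only [hGe_def, hPid s hs, hPid t ht, hEq hs]
    simp only [uOf, huE_def, hPid t ht, intervalIntegral.integral_congr hcongr]
  -- the extension operator from continuous maps on [0,a]
  set extK : C(↥(Icc (0:ℝ) a), ℝ) → ℝ → ℝ := fun F t => F (P t) with hextK_def
  have hextc : ∀ F, Continuous (extK F) := fun F => F.continuous.comp continuous_projIcc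
  have hext_eq : ∀ F, ∀ t, ∀ ht : t ∈ Icc (0:ℝ) a, extK F t = F ⟨t, ht⟩ :=
    fun F t ht => congrArg F (projIcc_of_mem ha' ht)
  have hext_bdd : ∀ F : C(↥(Icc (0:ℝ) a), ℝ), ‖F‖ ≤ M → ∀ s, |extK F s| ≤ M := by
    intro F hF s
    calc |extK F s| = ‖F (P s)‖ := by rw [Real.norm_eq_abs]
      _ ≤ ‖F‖ := F.norm_coe_le_norm _
      _ ≤ M := hF
  have hext_dist : ∀ F F' : C(↥(Icc (0:ℝ) a), ℝ), ∀ s,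
      |extK F s - extK F' s| ≤ dist F F' := by
    intro F F' s
    rw [← Real.dist_eq]
    exact ContinuousMap.dist_apply_le_dist _
  -- the operator as a map of plain functions
  set Afun : C(↥(Icc (0:ℝ) a), ℝ) → ℝ → ℝ :=
    fun F t => f t (uE (extK F) t) (uE (extK F) (φ t)) with hAfun_def
  have hAc : ∀ F : C(↥(Icc (0:ℝ) a), ℝ),
      Continuous fun x : ↥(Icc (0:ℝ) a) => Afun F (x : ℝ) := by
    intro F
    have hmap : Continuous ((fun p : ℝ × ℝ × ℝ => f p.1 p.2.1 p.2.2) ∘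
        fun x : ↥(Icc (0:ℝ) a) => ((x : ℝ), uE (extK F) (x : ℝ), uE (extK F) (φ (x : ℝ)))) := by
      apply hfc.comp_continuous
      · refine continuous_subtype_val.prodMk (Continuous.prodMk ?_ ?_)
        · exact (huEc _ (hextc F)).comp continuous_subtype_val
        · exact (huEc _ (hextc F)).comp hφc.restrict
      · intro x
        exact Set.mk_mem_prod x.2 (Set.mk_mem_prod (mem_univ _) (mem_univ _))
    exact hmap
  have hA_bound : ∀ F : C(↥(Icc (0:ℝ) a), ℝ), ‖F‖ ≤ M →
      ∀ x : ↥(Icc (0:ℝ) a), |Afun F (x : ℝ)| ≤ M := by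
    intro F hF x
    exact hbound (x : ℝ) x.2 _ _
      (huEb _ (hextc F) (hext_bdd F hF) _) (huEb _ (hextc F) (hext_bdd F hF) _)
  -- the ball
  set B : Set C(↥(Icc (0:ℝ) a), ℝ) := Metric.closedBall 0 M with hB_def
  have hmemB : ∀ F : C(↥(Icc (0:ℝ) a), ℝ), F ∈ B ↔ ‖F‖ ≤ M := by
    intro F
    rw [hB_def, Metric.mem_closedBall, dist_zero_right]
  haveI : CompleteSpace ↥B := Metric.isClosed_closedBall.completeSpace_coe
  have hXnorm : ∀ F : ↥B, ‖F.1‖ ≤ M := fun F => (hmemB F.1).mp F.2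
  -- the operator on the ball
  set T : ↥B → ↥B := fun F =>
    ⟨⟨fun x => Afun F.1 (x : ℝ), hAc F.1⟩, by
      rw [hmemB]
      exact (ContinuousMap.norm_le _ hM.le).mpr
        (fun x => by rw [Real.norm_eq_abs]; exact hA_bound F.1 (hXnorm F) x)⟩ with hT_def
  -- contraction estimate
  have hTlip : ∀ F1 F2 : ↥B, dist (T F1) (T F2) ≤ q * dist F1 F2 := by
    intro F1 F2
    rw [Subtype.dist_eq]
    refine (ContinuousMap.dist_le (mul_nonneg hqnn dist_nonneg)).mpr (fun x => ?_)
    have hd12 : dist F1 F2 = dist F1.1 F2.1 := Subtype.dist_eq F1 F2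
    have hdnn' : (0:ℝ) ≤ dist F1.1 F2.1 := dist_nonneg
    have h1 : |uE (extK F1.1) (x : ℝ) - uE (extK F2.1) (x : ℝ)| ≤ M0 * dist F1.1 F2.1 :=
      huEdiff _ _ (hextc F1.1) (hextc F2.1) _ (hext_dist F1.1 F2.1) _
    have h2 : |uE (extK F1.1) (φ (x : ℝ)) - uE (extK F2.1) (φ (x : ℝ))|
        ≤ M0 * dist F1.1 F2.1 :=
      huEdiff _ _ (hextc F1.1) (hextc F2.1) _ (hext_dist F1.1 F2.1) _
    have hkey := hLip (x : ℝ) x.2 (uE (extK F2.1) (x : ℝ)) (uE (extK F1.1) (x : ℝ))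
      (uE (extK F2.1) (φ (x : ℝ))) (uE (extK F1.1) (φ (x : ℝ)))
      (huEb _ (hextc F2.1) (hext_bdd F2.1 (hXnorm F2)) _)
      (huEb _ (hextc F1.1) (hext_bdd F1.1 (hXnorm F1)) _)
      (huEb _ (hextc F2.1) (hext_bdd F2.1 (hXnorm F2)) _)
      (huEb _ (hextc F1.1) (hext_bdd F1.1 (hXnorm F1)) _)
    calc dist ((T F1).1 x) ((T F2).1 x)
        = |f (x : ℝ) (uE (extK F1.1) (x : ℝ)) (uE (extK F1.1) (φ (x : ℝ)))
            - f (x : ℝ) (uE (extK F2.1) (x : ℝ)) (uE (extK F2.1) (φ (x : ℝ)))| := by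
          rw [Real.dist_eq]; rfl
      _ ≤ L1 * |uE (extK F1.1) (x : ℝ) - uE (extK F2.1) (x : ℝ)|
            + L2 * |uE (extK F1.1) (φ (x : ℝ)) - uE (extK F2.1) (φ (x : ℝ))| := hkey
      _ ≤ L1 * (M0 * dist F1.1 F2.1) + L2 * (M0 * dist F1.1 F2.1) :=
          add_le_add (mul_le_mul_of_nonneg_left h1 hL1) (mul_le_mul_of_nonneg_left h2 hL2)
      _ = q * dist F1 F2 := by rw [hd12, hq_def]; ring
  have hT : ContractingWith ⟨q, hqnn⟩ T := by
    constructor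
    · exact_mod_cast hq
    · exact LipschitzWith.of_dist_le_mul (fun x y => hTlip x y)
  -- the initial point of the iteration
  have hF0c : Continuous fun x : ↥(Icc (0:ℝ) a) => f (x : ℝ) 0 0 := by
    have hmap : Continuous ((fun p : ℝ × ℝ × ℝ => f p.1 p.2.1 p.2.2) ∘
        fun x : ↥(Icc (0:ℝ) a) => ((x : ℝ), (0:ℝ), (0:ℝ))) := by
      apply hfc.comp_continuous
      · exact continuous_subtype_val.prodMk (continuous_const.prodMk continuous_const)
      · intro x
        exact Set.mk_mem_prod x.2 (Set.mk_mem_prod (mem_univ _) (mem_univ _))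
    exact hmap
  set X0 : ↥B := ⟨⟨fun x => f (x : ℝ) 0 0, hF0c⟩, by
    rw [hmemB]
    refine (ContinuousMap.norm_le _ hM.le).mpr (fun x => ?_)
    rw [Real.norm_eq_abs]
    exact hbound (x : ℝ) x.2 0 0 (by simpa using hRnn) (by simpa using hRnn)⟩ with hX0_def
  haveI : Nonempty ↥B := ⟨X0⟩
  -- the fixed point
  set Φ : ↥B := ContractingWith.fixedPoint T hT with hΦ_def
  have hΦfix : T Φ = Φ := hT.fixedPoint_isFixedPt
  set ψ : ℝ → ℝ := extK Φ.1 with hψ_def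
  have hψIcc : ∀ t, ∀ ht : t ∈ Icc (0:ℝ) a, ψ t = Φ.1 ⟨t, ht⟩ := fun t ht => hext_eq Φ.1 t ht
  refine ⟨ψ, ⟨?_, ?_, ?_⟩, ?_, ?_⟩
  · exact (hextc Φ.1).continuousOn
  · intro t ht
    rw [hψIcc t ht]
    calc |Φ.1 ⟨t, ht⟩| = ‖Φ.1 ⟨t, ht⟩‖ := (Real.norm_eq_abs _).symm
      _ ≤ ‖Φ.1‖ := Φ.1.norm_coe_le_norm _
      _ ≤ M := hXnorm Φ
  · intro t ht
    have h1 : ψ t = (T Φ).1 ⟨t, ht⟩ := by rw [hΦfix]; exact hψIcc t ht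
    rw [h1]
    show Afun Φ.1 t = _
    rw [huE_eq ψ ψ (fun s _ => rfl) t ht, huE_eq ψ ψ (fun s _ => rfl) (φ t) (hφm ht)]
  · rintro ψ2 ⟨h2c, h2b, h2e⟩
    set F2 : C(↥(Icc (0:ℝ) a), ℝ) := ⟨fun x => ψ2 (x : ℝ), h2c.restrict⟩ with hF2_def
    have hF2mem : F2 ∈ B := by
      rw [hmemB]
      exact (ContinuousMap.norm_le _ hM.le).mpr
        (fun x => by rw [Real.norm_eq_abs]; exact h2b (x : ℝ) x.2)
    have hEq2 : EqOn ψ2 (extK F2) (Icc 0 a) := by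
      intro t ht
      rw [hext_eq F2 t ht]
      rfl
    have hfix2 : Function.IsFixedPt T (⟨F2, hF2mem⟩ : ↥B) := by
      apply Subtype.ext
      apply ContinuousMap.ext
      intro x
      show Afun F2 (x : ℝ) = ψ2 (x : ℝ)
      rw [h2e (x : ℝ) x.2, huE_eq ψ2 (extK F2) hEq2 (x : ℝ) x.2,
        huE_eq ψ2 (extK F2) hEq2 (φ (x : ℝ)) (hφm x.2)]
    have hXeq : (⟨F2, hF2mem⟩ : ↥B) = Φ := hT.fixedPoint_unique hfix2
    intro t ht
    calc ψ2 t = F2 ⟨t, ht⟩ := rfl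
      _ = Φ.1 ⟨t, ht⟩ := by rw [← hXeq]
      _ = ψ t := (hψIcc t ht).symm
  · -- iterate identification
    have hiter : ∀ k : ℕ, EqOn (psiIter a G g f φ k) (extK (T^[k] X0).1) (Icc 0 a) := by
      intro k
      induction k with
      | zero =>
        intro t ht
        rw [Function.iterate_zero_apply, hext_eq _ t ht]
        rfl
      | succ k ih =>
        intro t ht
        rw [Function.iterate_succ_apply', hext_eq _ t ht]
        show f t (uOf a G g (psiIter a G g f φ k) t)
            (uOf a G g (psiIter a G g f φ k) (φ t)) = Afun (T^[k] X0).1 t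
        rw [huE_eq _ _ ih t ht, huE_eq _ _ ih (φ t) (hφm ht)]
    intro d hd k t ht
    have hdnn : 0 ≤ d := by
      obtain ⟨s, _, hds⟩ := hd.1
      rw [← hds]; exact abs_nonneg _
    -- distance from X0 to T X0 is at most d
    have hdist0 : dist X0 (T X0) ≤ d := by
      rw [Subtype.dist_eq]
      refine (ContinuousMap.dist_le hdnn).mpr (fun x => ?_)
      rw [Real.dist_eq]
      have h0 : X0.1 x = psiIter a G g f φ 0 (x : ℝ) := by
        rw [hiter 0 x.2, Function.iterate_zero_apply, hext_eq _ _ x.2]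
      have h1 : (T X0).1 x = psiIter a G g f φ 1 (x : ℝ) := by
        have := hiter 1 x.2
        rw [Function.iterate_one] at this
        rw [this, hext_eq _ _ x.2]
      rw [h0, h1, abs_sub_comm]
      exact hd.2 ⟨(x : ℝ), x.2, rfl⟩
    have hkey : dist (T^[k] X0) Φ ≤ dist X0 (T X0) * q ^ k / (1 - q) :=
      hT.apriori_dist_iterate_fixedPoint_le X0 k
    have hpt : |psiIter a G g f φ k t - ψ t| ≤ dist (T^[k] X0) Φ := by
      rw [hiter k ht, hext_eq _ t ht, hψIcc t ht, Subtype.dist_eq, ← Real.dist_eq]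
      exact ContinuousMap.dist_apply_le_dist _
    have h1q : 0 < 1 - q := by linarith
    calc |psiIter a G g f φ k t - ψ t| ≤ dist (T^[k] X0) Φ := hpt
      _ ≤ dist X0 (T X0) * q ^ k / (1 - q) := hkey
      _ ≤ d * q ^ k / (1 - q) := by
          have := mul_le_mul_of_nonneg_right hdist0 (pow_nonneg hqnn k)
          exact div_le_div_of_nonneg_right this h1q.le
      _ = q ^ k / (1 - q) * d := by ring
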